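/- Let q be an odd prime power, a_1,…,a_n distinct in F_q, v_i ∈ F_q^*, u_i = ∏_{j≠i}(a_i - a_j)^{-1}, and 1 ≤ m ≤ ⌊(n+1)/2⌋. Then GRS_m(a,v,∞)^⊥ = GRS_{n+1-m}(a,v,∞) (Euclidean dual) if and only if v_i^2 = -u_i for all i = 1,…,n. -/

import Mathlib

/-- The extended generalized Reed–Solomon code `GRS_k(a, v, ∞)` as a set of codewords. -/
def eGRSset {F : Type*} [Field F] {n : ℕ} (a v : Fin n → F) (k : ℕ) :
    Set (Fin (n + 1) → F) :=
  {c | ∃ f : Polynomial F, f.degree < (k : ℕ) ∧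
    c = Fin.snoc (fun i => v i * f.eval (a i)) (f.coeff (k - 1))}

open Polynomial Finset

lemma basis_coeff_top {F : Type*} [Field F] {ι : Type*} [DecidableEq ι] (s : Finset ι)
    (v : ι → F) (i : ι) (hi : i ∈ s) :
    (Lagrange.basis s v i).coeff (s.card - 1) = Lagrange.nodalWeight s v i := by
  have hb : Lagrange.basis s v i =
      C (Lagrange.nodalWeight s v i) * Lagrange.nodal (s.erase i) v := by
    rw [Lagrange.basis, Lagrange.nodalWeight, Lagrange.nodal_eq, map_prod,
      ← Finset.prod_mul_distrib]
    exact Finset.prod_congr rfl fun j _ => rfl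
  have hdeg : (Lagrange.nodal (s.erase i) v).natDegree = s.card - 1 := by
    rw [Lagrange.natDegree_nodal, Finset.card_erase_of_mem hi]
  rw [hb, coeff_C_mul, ← hdeg, Lagrange.nodal_monic.coeff_natDegree, mul_one]

lemma coeff_pred_eq_sum {F : Type*} [Field F] {n : ℕ} (a : Fin n → F)
    (ha : Function.Injective a) (h : F[X]) (hd : h.degree < (n : ℕ)) :
    h.coeff (n - 1) = ∑ i, h.eval (a i) * Lagrange.nodalWeight Finset.univ a i := by
  have hvs : Set.InjOn a (Finset.univ : Finset (Fin n)) := ha.injOn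
  have hcard : (Finset.univ : Finset (Fin n)).card = n := by simp
  have heq := Lagrange.eq_interpolate (f := h) hvs (by rw [hcard]; exact_mod_cast hd)
  conv_lhs => rw [heq]
  rw [Lagrange.interpolate_apply, finset_sum_coeff]
  refine Finset.sum_congr rfl fun i _ => ?_
  have hb := basis_coeff_top (Finset.univ : Finset (Fin n)) a i (Finset.mem_univ i)
  rw [hcard] at hb
  rw [coeff_C_mul, hb]

theorem extended_GRS_euclidean_dual_iff (q n m : ℕ) (hq : IsPrimePow q) (hqodd : Odd q)
    (F : Type*) [Field F] [Fintype F] (hcard : Fintype.card F = q)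
    (a v : Fin n → F) (ha : Function.Injective a) (hv : ∀ i, v i ≠ 0)
    (u : Fin n → F) (hu : ∀ i, u i = (∏ j ∈ Finset.univ.erase i, (a i - a j))⁻¹)
    (hm1 : 1 ≤ m) (hm2 : m ≤ (n + 1) / 2) :
    {x : Fin (n + 1) → F | ∀ y ∈ eGRSset a v m, ∑ i, x i * y i = 0} =
        eGRSset a v (n + 1 - m) ↔
      ∀ i, (v i) ^ 2 = - u i := by
  have hn : 1 ≤ n := by omega
  have hmn : m ≤ n := by omega
  have hu' : ∀ i, u i = Lagrange.nodalWeight Finset.univ a i := by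
    intro i
    rw [hu, Lagrange.nodalWeight, ← Finset.prod_inv_distrib]
  constructor
  · -- equality of sets implies v i ^ 2 = - u i
    intro heq i
    obtain ⟨S, hSsub, hScard⟩ :=
      Finset.exists_subset_card_eq (s := (Finset.univ : Finset (Fin n)).erase i) (n := m - 1)
        (by rw [Finset.card_erase_of_mem (Finset.mem_univ i), Finset.card_univ,
          Fintype.card_fin]; omega)
    set T := ((Finset.univ : Finset (Fin n)).erase i) \ S with hT
    have hTcard : T.card = n - m := by
      rw [hT, Finset.card_sdiff_of_subset hSsub, Finset.card_erase_of_mem (Finset.mem_univ i),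
        Finset.card_univ, Fintype.card_fin, hScard]; omega
    set f := Lagrange.nodal S a with hf
    set g := Lagrange.nodal T a with hg
    have hfd : f.degree < (m : ℕ) := by
      rw [hf, Lagrange.degree_nodal, hScard]; exact_mod_cast Nat.sub_lt (by omega) one_pos
    have hgd : g.degree < ((n + 1 - m : ℕ) : WithBot ℕ) := by
      rw [hg, Lagrange.degree_nodal, hTcard]; exact_mod_cast (by omega : n - m < n + 1 - m)
    have hfc : f.coeff (m - 1) = 1 := by
      have h1 : f.natDegree = m - 1 := by rw [hf, Lagrange.natDegree_nodal, hScard]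
      rw [← h1]; exact Lagrange.nodal_monic.coeff_natDegree
    have hgc : g.coeff (n + 1 - m - 1) = 1 := by
      have h1 : g.natDegree = n + 1 - m - 1 := by
        rw [hg, Lagrange.natDegree_nodal, hTcard]; omega
      rw [← h1]; exact Lagrange.nodal_monic.coeff_natDegree
    have hx : (Fin.snoc (fun j => v j * g.eval (a j)) (g.coeff (n + 1 - m - 1)) :
        Fin (n+1) → F) ∈ eGRSset a v (n + 1 - m) := ⟨g, hgd, rfl⟩
    have hy : (Fin.snoc (fun j => v j * f.eval (a j)) (f.coeff (m - 1)) :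
        Fin (n+1) → F) ∈ eGRSset a v m := ⟨f, hfd, rfl⟩
    rw [← heq] at hx
    have h0 := hx _ hy
    rw [Fin.sum_univ_castSucc] at h0
    simp only [Fin.snoc_castSucc, Fin.snoc_last] at h0
    rw [hfc, hgc, mul_one] at h0
    have hsum : ∀ j : Fin n, j ≠ i →
        (v j * g.eval (a j)) * (v j * f.eval (a j)) = 0 := by
      intro j hj
      have hjmem : j ∈ ((Finset.univ : Finset (Fin n)).erase i) :=
        Finset.mem_erase.mpr ⟨hj, Finset.mem_univ j⟩
      by_cases hjS : j ∈ S
      · have hz : f.eval (a j) = 0 := Lagrange.eval_nodal_at_node hjS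
        rw [hz]; ring
      · have hz : g.eval (a j) = 0 :=
          Lagrange.eval_nodal_at_node (Finset.mem_sdiff.mpr ⟨hjmem, hjS⟩)
        rw [hz]; ring
    rw [Finset.sum_eq_single i (fun j _ hj => hsum j hj)
      (fun hi => absurd (Finset.mem_univ i) hi)] at h0
    have hST : S ∪ T = (Finset.univ : Finset (Fin n)).erase i := by
      rw [hT, Finset.union_sdiff_of_subset hSsub]
    have hprod : g.eval (a i) * f.eval (a i) = ∏ j ∈ (Finset.univ : Finset (Fin n)).erase i,
        (a i - a j) := by
      rw [hf, hg, Lagrange.eval_nodal, Lagrange.eval_nodal, ← hST,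
        Finset.prod_union (Finset.sdiff_disjoint.symm)]
      ring
    have hprodne : (∏ j ∈ (Finset.univ : Finset (Fin n)).erase i, (a i - a j)) ≠ 0 := by
      refine Finset.prod_ne_zero_iff.mpr fun j hj => ?_
      have hji := (Finset.mem_erase.mp hj).1
      exact sub_ne_zero_of_ne fun hij => hji (ha hij.symm)
    have hkey : v i ^ 2 * (∏ j ∈ (Finset.univ : Finset (Fin n)).erase i, (a i - a j)) + 1 = 0 := by
      rw [← hprod, ← h0]; ring
    rw [hu]
    field_simp
    linear_combination hkey
  · -- v i ^ 2 = - u i implies the duality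
    intro hV
    have hV' : ∀ i, v i ^ 2 = - Lagrange.nodalWeight Finset.univ a i := by
      intro i; rw [hV i, hu' i]
    ext x
    simp only [Set.mem_setOf_eq]
    constructor
    · -- dual ⊆ eGRS (n+1-m)
      intro hx
      set g := Lagrange.interpolate Finset.univ a (fun i => x (Fin.castSucc i) * (v i)⁻¹)
        with hgdef
      have hvs : Set.InjOn a (Finset.univ : Finset (Fin n)) := ha.injOn
      have hgd : g.degree < (n : ℕ) := by
        have h1 := Lagrange.degree_interpolate_lt (fun i => x (Fin.castSucc i) * (v i)⁻¹) hvs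
        rwa [show #(Finset.univ : Finset (Fin n)) = n by simp] at h1
      have heval : ∀ i, g.eval (a i) = x (Fin.castSucc i) * (v i)⁻¹ := fun i =>
        Lagrange.eval_interpolate_at_node _ hvs (Finset.mem_univ i)
      have hxg : ∀ i, x (Fin.castSucc i) = v i * g.eval (a i) := by
        intro i
        rw [heval i, mul_comm (v i), mul_assoc, inv_mul_cancel₀ (hv i), mul_one]
      have ortho : ∀ t : ℕ, t < m →
          ∑ i, Lagrange.nodalWeight Finset.univ a i * (g.eval (a i) * a i ^ t) =
            x (Fin.last n) * (if m - 1 = t then 1 else 0) := by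
        intro t ht
        have hy : (Fin.snoc (fun i => v i * (X ^ t : F[X]).eval (a i))
            ((X ^ t : F[X]).coeff (m - 1)) : Fin (n+1) → F) ∈ eGRSset a v m :=
          ⟨X ^ t, by rw [degree_X_pow]; exact_mod_cast ht, rfl⟩
        have h0 := hx _ hy
        rw [Fin.sum_univ_castSucc] at h0
        simp only [Fin.snoc_castSucc, Fin.snoc_last, eval_pow, eval_X, coeff_X_pow] at h0
        have hterm : ∀ i : Fin n, x (Fin.castSucc i) * (v i * a i ^ t) =
            - (Lagrange.nodalWeight Finset.univ a i * (g.eval (a i) * a i ^ t)) := by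
          intro i
          rw [hxg i]
          have h2 := hV' i
          calc (v i * g.eval (a i)) * (v i * a i ^ t)
              = v i ^ 2 * (g.eval (a i) * a i ^ t) := by ring
            _ = _ := by rw [h2]; ring
        rw [Finset.sum_congr rfl (fun i _ => hterm i), Finset.sum_neg_distrib] at h0
        linear_combination -h0
      -- downward induction on coefficients of g
      have claim : ∀ d : ℕ, ∀ s : ℕ, n - m ≤ s → s ≤ n - 1 → n - 1 - s = d →
          g.coeff s = if s = n - m then x (Fin.last n) else 0 := by
        intro d
        induction d using Nat.strong_induction_on with
        | _ d ih =>
          intro s hs1 hs2 hs3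
          have hcoeff_gt : ∀ k : ℕ, s < k → g.coeff k = 0 := by
            intro k hk
            by_cases hkn : k ≤ n - 1
            · have h1 := ih (n - 1 - k) (by omega) k (by omega) hkn rfl
              rw [h1, if_neg (by omega)]
            · exact coeff_eq_zero_of_degree_lt
                (hgd.trans_le (by exact_mod_cast (by omega : n ≤ k)))
          have hdegs : g.degree ≤ (s : ℕ) := by
            rw [degree_le_iff_coeff_zero]
            intro k hk
            exact hcoeff_gt k (by exact_mod_cast hk)
          have hdmul : (g * X ^ (n - 1 - s)).degree < ((n : ℕ) : WithBot ℕ) := by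
            refine lt_of_le_of_lt (degree_mul_le _ _) ?_
            rw [degree_X_pow]
            calc g.degree + ((n - 1 - s : ℕ) : WithBot ℕ)
                ≤ ((s : ℕ) : WithBot ℕ) + ((n - 1 - s : ℕ) : WithBot ℕ) :=
                  add_le_add hdegs le_rfl
              _ = ((n - 1 : ℕ) : WithBot ℕ) := by
                  rw [← Nat.cast_add]; congr 1; omega
              _ < ((n : ℕ) : WithBot ℕ) := by exact_mod_cast (by omega : n - 1 < n)
          have hL := coeff_pred_eq_sum a ha (g * X ^ (n - 1 - s)) hdmul
          have hLc : (g * X ^ (n - 1 - s)).coeff (n - 1) = g.coeff s := by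
            rw [coeff_mul_X_pow', if_pos (by omega)]
            congr 1; omega
          have hLe : ∀ i : Fin n, (g * X ^ (n - 1 - s)).eval (a i) *
              Lagrange.nodalWeight Finset.univ a i =
              Lagrange.nodalWeight Finset.univ a i * (g.eval (a i) * a i ^ (n - 1 - s)) := by
            intro i; rw [eval_mul, eval_pow, eval_X]; ring
          rw [hLc, Finset.sum_congr rfl (fun i _ => hLe i)] at hL
          rw [hL, ortho (n - 1 - s) (by omega)]
          by_cases hcase : s = n - m
          · rw [if_pos hcase, if_pos (by omega), mul_one]
          · rw [if_neg hcase, if_neg (by omega), mul_zero]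
      have hgd2 : g.degree < ((n + 1 - m : ℕ) : WithBot ℕ) := by
        rw [degree_lt_iff_coeff_zero]
        intro k hk
        have hk' : n + 1 - m ≤ k := by exact_mod_cast hk
        by_cases hkn : k ≤ n - 1
        · have h1 := claim (n - 1 - k) k (by omega) hkn rfl
          rw [h1, if_neg (by omega)]
        · exact coeff_eq_zero_of_degree_lt
            (hgd.trans_le (by exact_mod_cast (by omega : n ≤ k)))
      refine ⟨g, hgd2, ?_⟩
      funext j
      refine Fin.lastCases ?_ ?_ j
      · rw [Fin.snoc_last]
        have h1 : n + 1 - m - 1 = n - m := by omega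
        rw [h1]
        have h2 := claim (n - 1 - (n - m)) (n - m) le_rfl (by omega) rfl
        rw [h2, if_pos rfl]
      · intro i
        rw [Fin.snoc_castSucc]
        exact hxg i
    · -- eGRS (n+1-m) ⊆ dual
      rintro ⟨g, hgd, rfl⟩ y ⟨f, hfd, rfl⟩
      have hgle : g.degree ≤ ((n - m : ℕ) : WithBot ℕ) := by
        rw [degree_le_iff_coeff_zero]
        intro k hk
        have hk' : n - m < k := by exact_mod_cast hk
        exact coeff_eq_zero_of_degree_lt
          (hgd.trans_le (by exact_mod_cast (by omega : n + 1 - m ≤ k)))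
      have hfle : f.degree ≤ ((m - 1 : ℕ) : WithBot ℕ) := by
        rw [degree_le_iff_coeff_zero]
        intro k hk
        have hk' : m - 1 < k := by exact_mod_cast hk
        exact coeff_eq_zero_of_degree_lt (hfd.trans_le (by exact_mod_cast (by omega : m ≤ k)))
      have hdmul : (g * f).degree < ((n : ℕ) : WithBot ℕ) := by
        refine lt_of_le_of_lt (degree_mul_le _ _) ?_
        calc g.degree + f.degree ≤ ((n - m : ℕ) : WithBot ℕ) + ((m - 1 : ℕ) : WithBot ℕ) :=
              add_le_add hgle hfle
          _ = (((n - m) + (m - 1) : ℕ) : WithBot ℕ) := by rw [Nat.cast_add]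
          _ < ((n : ℕ) : WithBot ℕ) := by exact_mod_cast (by omega : (n - m) + (m - 1) < n)
      have hmulcoeff : (g * f).coeff (n - 1) = g.coeff (n + 1 - m - 1) * f.coeff (m - 1) := by
        rw [coeff_mul, Finset.sum_eq_single (n + 1 - m - 1, m - 1)]
        · intro b hb hne
          have hab := Finset.HasAntidiagonal.mem_antidiagonal.mp hb
          rcases Nat.lt_or_ge b.1 (n - m) with h1 | h1
          · have hz : f.coeff b.2 = 0 := coeff_eq_zero_of_degree_lt
              (hfle.trans_lt (by exact_mod_cast (by omega : m - 1 < b.2)))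
            rw [hz, mul_zero]
          · rcases Nat.eq_or_lt_of_le h1 with h2 | h2
            · exact absurd (Prod.ext (by omega) (by omega)) hne
            · have hz : g.coeff b.1 = 0 := coeff_eq_zero_of_degree_lt
                (hgle.trans_lt (by exact_mod_cast h2))
              rw [hz, zero_mul]
        · intro hmem
          exact absurd (Finset.HasAntidiagonal.mem_antidiagonal.mpr (by omega)) hmem
      rw [Fin.sum_univ_castSucc]
      simp only [Fin.snoc_castSucc, Fin.snoc_last]
      have hterm : ∀ i : Fin n, (v i * g.eval (a i)) * (v i * f.eval (a i)) =
          - ((g * f).eval (a i) * Lagrange.nodalWeight Finset.univ a i) := by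
        intro i
        have h2 := hV' i
        rw [eval_mul]
        calc (v i * g.eval (a i)) * (v i * f.eval (a i))
            = v i ^ 2 * (g.eval (a i) * f.eval (a i)) := by ring
          _ = _ := by rw [h2]; ring
      rw [Finset.sum_congr rfl (fun i _ => hterm i), Finset.sum_neg_distrib,
        ← coeff_pred_eq_sum a ha (g * f) hdmul, hmulcoeff]
      ring
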